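/- Over the polar triangle family, the circumcircle of Q₁Q₂Q₃ passes through the focus F = (−f, 0) of the parabola: |O' − F| = |O' − Q₁| where O' is the circumcenter. -/

import Mathlib

set_option maxHeartbeats 2000000 in
set_option maxRecDepth 16000 in
/-- Over the polar triangle family, the circumcircle of `Q₁Q₂Q₃` passes through the focus
`F = (−f, 0)` of the parabola: the circumcenter `O` satisfies `|O − F| = |O − Q₁|`. -/
theorem polar_circumcircle_through_focus (f y₁ Δ : ℝ) (hf : 0 < f) (Q₁ Q₂ Q₃ O : ℝ × ℝ)
    (hΔ : Δ = Real.sqrt (y₁ ^ 4 + 8 * f ^ 2 * y₁ ^ 2 + 16 * (8 * Real.sqrt 2 - 11) * f ^ 4))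
    (hden₁ : 2 * (2 * Real.sqrt 2 + 3) * y₁ ^ 2 - 8 * f ^ 2 ≠ 0)
    (hden₃ : (3 + 2 * Real.sqrt 2) * y₁ ^ 2 - 4 * f ^ 2 ≠ 0)
    (hQ₁ : Q₁ = ((1 + Real.sqrt 2) * ((4 * f * y₁ + Δ) * y₁ /
        (2 * (2 * Real.sqrt 2 + 3) * y₁ ^ 2 - 8 * f ^ 2)),
      (1 + Real.sqrt 2) * (((1 + Real.sqrt 2) * y₁ ^ 3 - 4 * (1 + Real.sqrt 2) * f ^ 2 * y₁ -
        2 * Δ * f) / (2 * (2 * Real.sqrt 2 + 3) * y₁ ^ 2 - 8 * f ^ 2))))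
    (hQ₂ : Q₂ = ((1 + Real.sqrt 2) * ((4 * f * y₁ - Δ) * y₁ /
        (2 * (2 * Real.sqrt 2 + 3) * y₁ ^ 2 - 8 * f ^ 2)),
      (1 + Real.sqrt 2) * (((1 + Real.sqrt 2) * y₁ ^ 3 - 4 * (1 + Real.sqrt 2) * f ^ 2 * y₁ +
        2 * Δ * f) / (2 * (2 * Real.sqrt 2 + 3) * y₁ ^ 2 - 8 * f ^ 2))))
    (hQ₃ : Q₃ = ((1 + Real.sqrt 2) * ((5 - 3 * Real.sqrt 2) *
        ((1 + 2 * Real.sqrt 2) * y₁ ^ 2 - 28 * f ^ 2) * f /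
        (7 * ((3 + 2 * Real.sqrt 2) * y₁ ^ 2 - 4 * f ^ 2))),
      (1 + Real.sqrt 2) * (-(8 * f ^ 2 * y₁) /
        ((3 + 2 * Real.sqrt 2) * y₁ ^ 2 - 4 * f ^ 2))))
    (hO₁ : (O.1 - Q₁.1) ^ 2 + (O.2 - Q₁.2) ^ 2 = (O.1 - Q₂.1) ^ 2 + (O.2 - Q₂.2) ^ 2)
    (hO₂ : (O.1 - Q₁.1) ^ 2 + (O.2 - Q₁.2) ^ 2 = (O.1 - Q₃.1) ^ 2 + (O.2 - Q₃.2) ^ 2) :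
    (O.1 - (-f)) ^ 2 + (O.2 - 0) ^ 2 = (O.1 - Q₁.1) ^ 2 + (O.2 - Q₁.2) ^ 2 := by
  subst hQ₁ hQ₂ hQ₃
  have hd1 : y₁ ^ 2 * 2 * (Real.sqrt 2 * 2 + 3) - f ^ 2 * 8 ≠ 0 := by contrapose! hden₁; linear_combination hden₁
  have hd3 : y₁ ^ 2 * (3 + Real.sqrt 2 * 2) - 4 * f ^ 2 ≠ 0 := by contrapose! hden₃; linear_combination hden₃
  field_simp at hO₁ hO₂ ⊢
  have hs2 : Real.sqrt 2 ^ 2 = 2 := Real.sq_sqrt (by norm_num)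
  have hs0 : 0 ≤ Real.sqrt 2 := Real.sqrt_nonneg 2
  have hs1 : 1 < Real.sqrt 2 := by clear hO₁ hO₂ hΔ hden₁ hden₃; nlinarith [hs2, hs0]
  have hs118 : 11 < 8 * Real.sqrt 2 := by clear hO₁ hO₂ hΔ hden₁ hden₃; nlinarith [hs2, hs0]
  have harg : 0 < y₁ ^ 4 + 8 * f ^ 2 * y₁ ^ 2 + 16 * (8 * Real.sqrt 2 - 11) * f ^ 4 := by
    clear hO₁ hO₂ hΔ hden₁ hden₃
    nlinarith [sq_nonneg (y₁ ^ 2), sq_nonneg (y₁ * f), pow_pos hf 4]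
  have hD2 : Δ ^ 2 = y₁ ^ 4 + 8 * f ^ 2 * y₁ ^ 2 + 16 * (8 * Real.sqrt 2 - 11) * f ^ 4 := by
    rw [hΔ]; exact Real.sq_sqrt harg.le
  have hDpos : 0 < Δ := by rw [hΔ]; exact Real.sqrt_pos.mpr harg
  have hU : 0 < (7 + 5 * Real.sqrt 2) * y₁ ^ 4 + (40 + 24 * Real.sqrt 2) * f ^ 2 * y₁ ^ 2 +
      (48 + 16 * Real.sqrt 2) * f ^ 4 := by
    clear hO₁ hO₂ hΔ hden₁ hden₃ hD2
    nlinarith [sq_nonneg (y₁ ^ 2), sq_nonneg (y₁ * f), pow_pos hf 4,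
      mul_nonneg hs0 (sq_nonneg (y₁ ^ 2)), mul_nonneg hs0 (sq_nonneg (y₁ * f)),
      mul_nonneg hs0 (pow_pos hf 4).le]
  have h1' : (2 * (1 + Real.sqrt 2) * Δ) * ((-12)*y₁^3*O.1 + (-8)*y₁^3*(Real.sqrt 2)*O.1 + (24)*f*y₁^2*O.2 + (16)*f*y₁^2*(Real.sqrt 2)*O.2 + (4)*f*y₁^3 + (-4)*f*y₁^3*(Real.sqrt 2)^2 + (16)*f^2*y₁*O.1 + (-32)*f^3*O.2 + (16)*f^3*y₁ + (32)*f^3*y₁*(Real.sqrt 2) + (16)*f^3*y₁*(Real.sqrt 2)^2) = 0 := by linear_combination hO₁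
  have h1 : ((-12)*y₁^3*O.1 + (-8)*y₁^3*(Real.sqrt 2)*O.1 + (24)*f*y₁^2*O.2 + (16)*f*y₁^2*(Real.sqrt 2)*O.2 + (4)*f*y₁^3 + (-4)*f*y₁^3*(Real.sqrt 2)^2 + (16)*f^2*y₁*O.1 + (-32)*f^3*O.2 + (16)*f^3*y₁ + (32)*f^3*y₁*(Real.sqrt 2) + (16)*f^3*y₁*(Real.sqrt 2)^2) = (0 : ℝ) := by
    refine (mul_eq_zero.mp h1').resolve_left ?_
    exact mul_ne_zero (mul_ne_zero two_ne_zero (by positivity)) hDpos.ne'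
  have h2' : ((3 + 2 * Real.sqrt 2) * y₁ ^ 2 - 4 * f ^ 2) ^ 4 * ((49)*y₁^2*Δ^2 + (98)*y₁^2*(Real.sqrt 2)*Δ^2 + (49)*y₁^2*(Real.sqrt 2)^2*Δ^2 + (-588)*y₁^3*Δ*O.1 + (-980)*y₁^3*(Real.sqrt 2)*Δ*O.1 + (-392)*y₁^3*(Real.sqrt 2)^2*Δ*O.1 + (-588)*y₁^5*O.2 + (-1568)*y₁^5*(Real.sqrt 2)*O.2 + (-1372)*y₁^5*(Real.sqrt 2)^2*O.2 + (-392)*y₁^5*(Real.sqrt 2)^3*O.2 + (49)*y₁^6 + (196)*y₁^6*(Real.sqrt 2) + (294)*y₁^6*(Real.sqrt 2)^2 + (196)*y₁^6*(Real.sqrt 2)^3 + (49)*y₁^6*(Real.sqrt 2)^4 + (1176)*f*y₁^2*Δ*O.2 + (1960)*f*y₁^2*(Real.sqrt 2)*Δ*O.2 + (784)*f*y₁^2*(Real.sqrt 2)^2*Δ*O.2 + (196)*f*y₁^3*Δ + (196)*f*y₁^3*(Real.sqrt 2)*Δ + (-196)*f*y₁^3*(Real.sqrt 2)^2*Δ +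 (-196)*f*y₁^3*(Real.sqrt 2)^3*Δ + (-1512)*f*y₁^4*O.1 + (-1344)*f*y₁^4*(Real.sqrt 2)*O.1 + (-56)*f*y₁^4*(Real.sqrt 2)^2*O.1 + (-896)*f*y₁^4*(Real.sqrt 2)^3*O.1 + (-672)*f*y₁^4*(Real.sqrt 2)^4*O.1 + (196)*f^2*Δ^2 + (392)*f^2*(Real.sqrt 2)*Δ^2 + (196)*f^2*(Real.sqrt 2)^2*Δ^2 + (784)*f^2*y₁*Δ*O.1 + (784)*f^2*y₁*(Real.sqrt 2)*Δ*O.1 + (-6272)*f^2*y₁^3*O.2 + (-7840)*f^2*y₁^3*(Real.sqrt 2)*O.2 + (1568)*f^2*y₁^3*(Real.sqrt 2)^3*O.2 + (292)*f^2*y₁^4 + (-480)*f^2*y₁^4*(Real.sqrt 2) + (-2184)*f^2*y₁^4*(Real.sqrt 2)^2 + (-1424)*f^2*y₁^4*(Real.sqrt 2)^3 + (180)*f^2*y₁^4*(Real.sqrt 2)^4 + (48)*f^2*y₁^4*(Real.sqrt 2)^5 + (-144)*f^2*y₁^4*(Real.sqrt 2)^6 + (-1568)*f^3*Δ*O.2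 + (-1568)*f^3*(Real.sqrt 2)*Δ*O.2 + (784)*f^3*y₁*Δ + (2352)*f^3*y₁*(Real.sqrt 2)*Δ + (2352)*f^3*y₁*(Real.sqrt 2)^2*Δ + (784)*f^3*y₁*(Real.sqrt 2)^3*Δ + (-21504)*f^3*y₁^2*O.1 + (-24640)*f^3*y₁^2*(Real.sqrt 2)*O.1 + (7616)*f^3*y₁^2*(Real.sqrt 2)^2*O.1 + (10752)*f^3*y₁^2*(Real.sqrt 2)^3*O.1 + (9408)*f^4*y₁*O.2 + (6272)*f^4*y₁*(Real.sqrt 2)*O.2 + (-3136)*f^4*y₁*(Real.sqrt 2)^2*O.2 + (-6160)*f^4*y₁^2 + (-6272)*f^4*y₁^2*(Real.sqrt 2) + (-4704)*f^4*y₁^2*(Real.sqrt 2)^2 + (-11200)*f^4*y₁^2*(Real.sqrt 2)^3 + (-2576)*f^4*y₁^2*(Real.sqrt 2)^4 + (4032)*f^4*y₁^2*(Real.sqrt 2)^5 + (31360)*f^5*O.1 + (12544)*f^5*(Real.sqrt 2)*O.1 + (-18816)*f^5*(Real.sqrt 2)^2*O.1 + (-78400)*f^6 + (-62720)*f^6*(Real.sqrt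 2) + (81536)*f^6*(Real.sqrt 2)^2 + (37632)*f^6*(Real.sqrt 2)^3 + (-28224)*f^6*(Real.sqrt 2)^4) = 0 := by
    linear_combination ((y₁ ^ 2 * (3 + Real.sqrt 2 * 2) - 4 * f ^ 2) ^ 2) * hO₂
  have h2 : ((49)*y₁^2*Δ^2 + (98)*y₁^2*(Real.sqrt 2)*Δ^2 + (49)*y₁^2*(Real.sqrt 2)^2*Δ^2 + (-588)*y₁^3*Δ*O.1 + (-980)*y₁^3*(Real.sqrt 2)*Δ*O.1 + (-392)*y₁^3*(Real.sqrt 2)^2*Δ*O.1 + (-588)*y₁^5*O.2 + (-1568)*y₁^5*(Real.sqrt 2)*O.2 + (-1372)*y₁^5*(Real.sqrt 2)^2*O.2 + (-392)*y₁^5*(Real.sqrt 2)^3*O.2 + (49)*y₁^6 + (196)*y₁^6*(Real.sqrt 2) + (294)*y₁^6*(Real.sqrt 2)^2 + (196)*y₁^6*(Real.sqrt 2)^3 + (49)*y₁^6*(Real.sqrt 2)^4 + (1176)*f*y₁^2*Δ*O.2 + (1960)*f*y₁^2*(Real.sqrt 2)*Δ*O.2 + (784)*f*y₁^2*(Real.sqrt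 2)^2*Δ*O.2 + (196)*f*y₁^3*Δ + (196)*f*y₁^3*(Real.sqrt 2)*Δ + (-196)*f*y₁^3*(Real.sqrt 2)^2*Δ + (-196)*f*y₁^3*(Real.sqrt 2)^3*Δ + (-1512)*f*y₁^4*O.1 + (-1344)*f*y₁^4*(Real.sqrt 2)*O.1 + (-56)*f*y₁^4*(Real.sqrt 2)^2*O.1 + (-896)*f*y₁^4*(Real.sqrt 2)^3*O.1 + (-672)*f*y₁^4*(Real.sqrt 2)^4*O.1 + (196)*f^2*Δ^2 + (392)*f^2*(Real.sqrt 2)*Δ^2 + (196)*f^2*(Real.sqrt 2)^2*Δ^2 + (784)*f^2*y₁*Δ*O.1 + (784)*f^2*y₁*(Real.sqrt 2)*Δ*O.1 + (-6272)*f^2*y₁^3*O.2 + (-7840)*f^2*y₁^3*(Real.sqrt 2)*O.2 + (1568)*f^2*y₁^3*(Real.sqrt 2)^3*O.2 + (292)*f^2*y₁^4 + (-480)*f^2*y₁^4*(Real.sqrt 2) + (-2184)*f^2*y₁^4*(Real.sqrt 2)^2 + (-1424)*f^2*y₁^4*(Real.sqrt 2)^3 + (180)*f^2*y₁^4*(Real.sqrt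 2)^4 + (48)*f^2*y₁^4*(Real.sqrt 2)^5 + (-144)*f^2*y₁^4*(Real.sqrt 2)^6 + (-1568)*f^3*Δ*O.2 + (-1568)*f^3*(Real.sqrt 2)*Δ*O.2 + (784)*f^3*y₁*Δ + (2352)*f^3*y₁*(Real.sqrt 2)*Δ + (2352)*f^3*y₁*(Real.sqrt 2)^2*Δ + (784)*f^3*y₁*(Real.sqrt 2)^3*Δ + (-21504)*f^3*y₁^2*O.1 + (-24640)*f^3*y₁^2*(Real.sqrt 2)*O.1 + (7616)*f^3*y₁^2*(Real.sqrt 2)^2*O.1 + (10752)*f^3*y₁^2*(Real.sqrt 2)^3*O.1 + (9408)*f^4*y₁*O.2 + (6272)*f^4*y₁*(Real.sqrt 2)*O.2 + (-3136)*f^4*y₁*(Real.sqrt 2)^2*O.2 + (-6160)*f^4*y₁^2 + (-6272)*f^4*y₁^2*(Real.sqrt 2) + (-4704)*f^4*y₁^2*(Real.sqrt 2)^2 + (-11200)*f^4*y₁^2*(Real.sqrt 2)^3 + (-2576)*f^4*y₁^2*(Real.sqrt 2)^4 + (4032)*f^4*y₁^2*(Real.sqrt 2)^5 + (31360)*f^5*O.1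 + (12544)*f^5*(Real.sqrt 2)*O.1 + (-18816)*f^5*(Real.sqrt 2)^2*O.1 + (-78400)*f^6 + (-62720)*f^6*(Real.sqrt 2) + (81536)*f^6*(Real.sqrt 2)^2 + (37632)*f^6*(Real.sqrt 2)^3 + (-28224)*f^6*(Real.sqrt 2)^4) = (0 : ℝ) :=
    (mul_eq_zero.mp h2').resolve_left (pow_ne_zero 4 hden₃)
  clear hO₁ hO₂ h1' h2'
  have hdet : (784 * (Real.sqrt 2 - 1) * ((3 + 2 * Real.sqrt 2) * y₁ ^ 2 - 4 * f ^ 2) ^ 2 * ((7 + 5 * Real.sqrt 2) * y₁ ^ 4 + (40 + 24 * Real.sqrt 2) * f ^ 2 * y₁ ^ 2 + (48 + 16 * Real.sqrt 2) * f ^ 4)) ≠ 0 := by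
    refine mul_ne_zero (mul_ne_zero (mul_ne_zero (by norm_num) ?_) (pow_ne_zero 2 hden₃)) hU.ne'
    nlinarith [hs1]
  have key : (784 * (Real.sqrt 2 - 1) * ((3 + 2 * Real.sqrt 2) * y₁ ^ 2 - 4 * f ^ 2) ^ 2 * ((7 + 5 * Real.sqrt 2) * y₁ ^ 4 + (40 + 24 * Real.sqrt 2) * f ^ 2 * y₁ ^ 2 + (48 + 16 * Real.sqrt 2) * f ^ 4)) * (((O.1 + f) ^ 2 + O.2 ^ 2) * (2 * (2 * Real.sqrt 2 + 3) * y₁ ^ 2 - 8 * f ^ 2) ^ 2 - ((O.1 * (2 * (2 * Real.sqrt 2 + 3) * y₁ ^ 2 - 8 * f ^ 2) - (1 + Real.sqrt 2) * ((4 * f * y₁ + Δ) * y₁)) ^ 2 + (O.2 * (2 * (2 * Real.sqrt 2 + 3) * y₁ ^ 2 - 8 * f ^ 2) - (1 + Real.sqrt 2) * ((1 + Real.sqrt 2) * y₁ ^ 3 - 4 * (1 + Real.sqrt 2) * f ^ 2 * y₁ - 2 * Δ * f)) ^ 2)) = 0 := by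
    linear_combination (norm := ring1)
      ((-1059968)*f*y₁^9 + (-749504)*f*y₁^9*(Real.sqrt 2) + (-363776)*f^2*y₁^6*Δ + (-257152)*f^2*y₁^6*(Real.sqrt 2)*Δ + (-3512320)*f^3*y₁^7 + (-2483712)*f^3*y₁^7*(Real.sqrt 2) + (-953344)*f^4*y₁^4*Δ + (-677376)*f^4*y₁^4*(Real.sqrt 2)*Δ + (3411968)*f^5*y₁^5 + (2408448)*f^5*y₁^5*(Real.sqrt 2) + (1806336)*f^6*y₁^2*Δ + (1304576)*f^6*y₁^2*(Real.sqrt 2)*Δ + (1605632)*f^7*y₁^3 + (1204224)*f^7*y₁^3*(Real.sqrt 2) + (-802816)*f^8*Δ + (-401408)*f^8*(Real.sqrt 2)*Δ + (-1605632)*f^9*y₁ + (-802816)*f^9*y₁*(Real.sqrt 2)) * h1 +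
      ((-1584)*y₁^8 + (-1120)*y₁^8*(Real.sqrt 2) + (-3072)*f^2*y₁^6 + (-2176)*f^2*y₁^6*(Real.sqrt 2) + (10752)*f^4*y₁^4 + (7680)*f^4*y₁^4*(Real.sqrt 2) + (-8192)*f^6*y₁^2 + (-6144)*f^6*y₁^2*(Real.sqrt 2) + (4096)*f^8) * h2 +
      ((762048)*y₁^11*Δ*O.1 + (1909824)*y₁^11*(Real.sqrt 2)*Δ*O.1 + (1762432)*y₁^11*(Real.sqrt 2)^2*Δ*O.1 + (740096)*y₁^11*(Real.sqrt 2)^3*Δ*O.1 + (125440)*y₁^11*(Real.sqrt 2)^4*Δ*O.1 + (762048)*y₁^13*O.2 + (2671872)*y₁^13*(Real.sqrt 2)*O.2 + (3672256)*y₁^13*(Real.sqrt 2)^2*O.2 + (2502528)*y₁^13*(Real.sqrt 2)^3*O.2 + (865536)*y₁^13*(Real.sqrt 2)^4*O.2 + (125440)*y₁^13*(Real.sqrt 2)^5*O.2 + (-127008)*y₁^14 + (-487648)*y₁^14*(Real.sqrt 2) + (-795760)*y₁^14*(Real.sqrt 2)^2 + (-721280)*y₁^14*(Real.sqrt 2)^3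 + (-386512)*y₁^14*(Real.sqrt 2)^4 + (-116032)*y₁^14*(Real.sqrt 2)^5 + (-15680)*y₁^14*(Real.sqrt 2)^6 + (-1524096)*f*y₁^10*Δ*O.2 + (-3819648)*f*y₁^10*(Real.sqrt 2)*Δ*O.2 + (-3524864)*f*y₁^10*(Real.sqrt 2)^2*Δ*O.2 + (-1480192)*f*y₁^10*(Real.sqrt 2)^3*Δ*O.2 + (-250880)*f*y₁^10*(Real.sqrt 2)^4*Δ*O.2 + (-254016)*f*y₁^11*Δ + (-467264)*f*y₁^11*(Real.sqrt 2)*Δ + (-21952)*f*y₁^11*(Real.sqrt 2)^2*Δ + (404544)*f*y₁^11*(Real.sqrt 2)^3*Δ + (275968)*f*y₁^11*(Real.sqrt 2)^4*Δ + (62720)*f*y₁^11*(Real.sqrt 2)^5*Δ + (10520832)*f*y₁^12*O.1 + (18099200)*f*y₁^12*(Real.sqrt 2)*O.1 + (13260800)*f*y₁^12*(Real.sqrt 2)^2*O.1 + (5419008)*f*y₁^12*(Real.sqrt 2)^3*O.1 + (1003520)*f*y₁^12*(Real.sqrt 2)^4*O.1 + (2972928)*f^2*y₁^9*Δ*O.1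 + (6058752)*f^2*y₁^9*(Real.sqrt 2)*Δ*O.1 + (5870592)*f^2*y₁^9*(Real.sqrt 2)^2*Δ*O.1 + (2960384)*f^2*y₁^9*(Real.sqrt 2)^3*Δ*O.1 + (602112)*f^2*y₁^9*(Real.sqrt 2)^4*Δ*O.1 + (-7526400)*f^2*y₁^11*O.2 + (-6623232)*f^2*y₁^11*(Real.sqrt 2)*O.2 + (-2759680)*f^2*y₁^11*(Real.sqrt 2)^2*O.2 + (-1179136)*f^2*y₁^11*(Real.sqrt 2)^3*O.2 + (100352)*f^2*y₁^11*(Real.sqrt 2)^4*O.2 + (100352)*f^2*y₁^11*(Real.sqrt 2)^5*O.2 + (-2722816)*f^2*y₁^12 + (-2759424)*f^2*y₁^12*(Real.sqrt 2) + (947584)*f^2*y₁^12*(Real.sqrt 2)^2 + (1767680)*f^2*y₁^12*(Real.sqrt 2)^3 + (998528)*f^2*y₁^12*(Real.sqrt 2)^4 + (252672)*f^2*y₁^12*(Real.sqrt 2)^5 + (50176)*f^2*y₁^12*(Real.sqrt 2)^6 + (-5945856)*f^3*y₁^8*Δ*O.2 + (-12117504)*f^3*y₁^8*(Real.sqrt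 2)*Δ*O.2 + (-11741184)*f^3*y₁^8*(Real.sqrt 2)^2*Δ*O.2 + (-5920768)*f^3*y₁^8*(Real.sqrt 2)^3*Δ*O.2 + (-1204224)*f^3*y₁^8*(Real.sqrt 2)^4*Δ*O.2 + (-2345728)*f^3*y₁^9*Δ + (-5657344)*f^3*y₁^9*(Real.sqrt 2)*Δ + (-5682432)*f^3*y₁^9*(Real.sqrt 2)^2*Δ + (-2872576)*f^3*y₁^9*(Real.sqrt 2)^3*Δ + (-451584)*f^3*y₁^9*(Real.sqrt 2)^4*Δ + (50176)*f^3*y₁^9*(Real.sqrt 2)^5*Δ + (34657280)*f^3*y₁^10*O.1 + (72898560)*f^3*y₁^10*(Real.sqrt 2)*O.1 + (54792192)*f^3*y₁^10*(Real.sqrt 2)^2*O.1 + (22421504)*f^3*y₁^10*(Real.sqrt 2)^3*O.1 + (4816896)*f^3*y₁^10*(Real.sqrt 2)^4*O.1 + (-4716544)*f^4*y₁^7*Δ*O.1 + (-9934848)*f^4*y₁^7*(Real.sqrt 2)*Δ*O.1 + (-6823936)*f^4*y₁^7*(Real.sqrt 2)^2*Δ*O.1 + (-602112)*f^4*y₁^7*(Real.sqrt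 2)^3*Δ*O.1 + (401408)*f^4*y₁^7*(Real.sqrt 2)^4*Δ*O.1 + (-31360000)*f^4*y₁^9*O.2 + (-67235840)*f^4*y₁^9*(Real.sqrt 2)*O.2 + (-64476160)*f^4*y₁^9*(Real.sqrt 2)^2*O.2 + (-42749952)*f^4*y₁^9*(Real.sqrt 2)^3*O.2 + (-14450688)*f^4*y₁^9*(Real.sqrt 2)^4*O.2 + (-2007040)*f^4*y₁^9*(Real.sqrt 2)^5*O.2 + (-3541504)*f^4*y₁^10 + (-3305984)*f^4*y₁^10*(Real.sqrt 2) + (-2610432)*f^4*y₁^10*(Real.sqrt 2)^2 + (-1152000)*f^4*y₁^10*(Real.sqrt 2)^3 + (1079552)*f^4*y₁^10*(Real.sqrt 2)^4 + (-212992)*f^4*y₁^10*(Real.sqrt 2)^5 + (301056)*f^4*y₁^10*(Real.sqrt 2)^6 + (9433088)*f^5*y₁^6*Δ*O.2 + (19869696)*f^5*y₁^6*(Real.sqrt 2)*Δ*O.2 + (13647872)*f^5*y₁^6*(Real.sqrt 2)^2*Δ*O.2 + (1204224)*f^5*y₁^6*(Real.sqrt 2)^3*Δ*O.2 + (-802816)*f^5*y₁^6*(Real.sqrt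 2)^4*Δ*O.2 + (-5519360)*f^5*y₁^7*Δ + (-16558080)*f^5*y₁^7*(Real.sqrt 2)*Δ + (-23783424)*f^5*y₁^7*(Real.sqrt 2)^2*Δ + (-18765824)*f^5*y₁^7*(Real.sqrt 2)^3*Δ + (-7024640)*f^5*y₁^7*(Real.sqrt 2)^4*Δ + (-1003520)*f^5*y₁^7*(Real.sqrt 2)^5*Δ + (-84180992)*f^5*y₁^8*O.1 + (-94388224)*f^5*y₁^8*(Real.sqrt 2)*O.1 + (-37961728)*f^5*y₁^8*(Real.sqrt 2)^2*O.1 + (-3670016)*f^5*y₁^8*(Real.sqrt 2)^3*O.1 + (3211264)*f^5*y₁^8*(Real.sqrt 2)^4*O.1 + (-11640832)*f^6*y₁^5*Δ*O.1 + (-10035200)*f^6*y₁^5*(Real.sqrt 2)*Δ*O.1 + (-7225344)*f^6*y₁^5*(Real.sqrt 2)^2*Δ*O.1 + (-2408448)*f^6*y₁^5*(Real.sqrt 2)^3*Δ*O.1 + (64225280)*f^6*y₁^7*O.2 + (52985856)*f^6*y₁^7*(Real.sqrt 2)*O.2 + (49774592)*f^6*y₁^7*(Real.sqrt 2)^2*O.2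 + (20070400)*f^6*y₁^7*(Real.sqrt 2)^3*O.2 + (-1605632)*f^6*y₁^7*(Real.sqrt 2)^4*O.2 + (-1605632)*f^6*y₁^7*(Real.sqrt 2)^5*O.2 + (111935488)*f^6*y₁^8 + (163397632)*f^6*y₁^8*(Real.sqrt 2) + (-42213376)*f^6*y₁^8*(Real.sqrt 2)^2 + (-153870336)*f^6*y₁^8*(Real.sqrt 2)^3 + (-82972672)*f^6*y₁^8*(Real.sqrt 2)^4 + (-23379968)*f^6*y₁^8*(Real.sqrt 2)^5 + (-802816)*f^6*y₁^8*(Real.sqrt 2)^6 + (23281664)*f^7*y₁^4*Δ*O.2 + (20070400)*f^7*y₁^4*(Real.sqrt 2)*Δ*O.2 + (14450688)*f^7*y₁^4*(Real.sqrt 2)^2*Δ*O.2 + (4816896)*f^7*y₁^4*(Real.sqrt 2)^3*Δ*O.2 + (2809856)*f^7*y₁^5*Δ + (5218304)*f^7*y₁^5*(Real.sqrt 2)*Δ + (5218304)*f^7*y₁^5*(Real.sqrt 2)^2*Δ + (1204224)*f^7*y₁^5*(Real.sqrt 2)^3*Δ + (-2408448)*f^7*y₁^5*(Real.sqrt 2)^4*Δ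 + (-802816)*f^7*y₁^5*(Real.sqrt 2)^5*Δ + (-112623616)*f^7*y₁^6*O.1 + (-255066112)*f^7*y₁^6*(Real.sqrt 2)*O.1 + (-148176896)*f^7*y₁^6*(Real.sqrt 2)^2*O.1 + (-26607616)*f^7*y₁^6*(Real.sqrt 2)^3*O.1 + (21676032)*f^8*y₁^3*Δ*O.1 + (16859136)*f^8*y₁^3*(Real.sqrt 2)*Δ*O.1 + (4816896)*f^8*y₁^3*(Real.sqrt 2)^2*Δ*O.1 + (45760512)*f^8*y₁^5*O.2 + (131661824)*f^8*y₁^5*(Real.sqrt 2)*O.2 + (90718208)*f^8*y₁^5*(Real.sqrt 2)^2*O.2 + (43352064)*f^8*y₁^5*(Real.sqrt 2)^3*O.2 + (9633792)*f^8*y₁^5*(Real.sqrt 2)^4*O.2 + (178233344)*f^8*y₁^6 + (367583232)*f^8*y₁^6*(Real.sqrt 2) + (148107264)*f^8*y₁^6*(Real.sqrt 2)^2 + (-167542784)*f^8*y₁^6*(Real.sqrt 2)^3 + (-172142592)*f^8*y₁^6*(Real.sqrt 2)^4 + (-49856512)*f^8*y₁^6*(Real.sqrt 2)^5 + (-802816)*f^8*y₁^6*(Real.sqrt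 2)^6 + (-43352064)*f^9*y₁^2*Δ*O.2 + (-33718272)*f^9*y₁^2*(Real.sqrt 2)*Δ*O.2 + (-9633792)*f^9*y₁^2*(Real.sqrt 2)^2*Δ*O.2 + (12042240)*f^9*y₁^3*Δ + (37732352)*f^9*y₁^3*(Real.sqrt 2)*Δ + (39337984)*f^9*y₁^3*(Real.sqrt 2)^2*Δ + (16859136)*f^9*y₁^3*(Real.sqrt 2)^3*Δ + (3211264)*f^9*y₁^3*(Real.sqrt 2)^4*Δ + (342687744)*f^9*y₁^4*O.1 + (466092032)*f^9*y₁^4*(Real.sqrt 2)*O.1 + (126615552)*f^9*y₁^4*(Real.sqrt 2)^2*O.1 + (-9633792)*f^10*y₁*Δ*O.1 + (-3211264)*f^10*y₁*(Real.sqrt 2)*Δ*O.1 + (-128450560)*f^10*y₁^3*O.2 + (-179830784)*f^10*y₁^3*(Real.sqrt 2)*O.2 + (-89915392)*f^10*y₁^3*(Real.sqrt 2)^2*O.2 + (-19267584)*f^10*y₁^3*(Real.sqrt 2)^3*O.2 + (-668205056)*f^10*y₁^4 + (-1024917504)*f^10*y₁^4*(Real.sqrt 2) + (78086144)*f^10*y₁^4*(Real.sqrt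 2)^2 + (542048256)*f^10*y₁^4*(Real.sqrt 2)^3 + (81559552)*f^10*y₁^4*(Real.sqrt 2)^4 + (-22478848)*f^10*y₁^4*(Real.sqrt 2)^5 + (19267584)*f^11*Δ*O.2 + (6422528)*f^11*(Real.sqrt 2)*Δ*O.2 + (-9633792)*f^11*y₁*Δ + (-22478848)*f^11*y₁*(Real.sqrt 2)*Δ + (-16056320)*f^11*y₁*(Real.sqrt 2)^2*Δ + (-3211264)*f^11*y₁*(Real.sqrt 2)^3*Δ + (-288096256)*f^11*y₁^2*O.1 + (-223870976)*f^11*y₁^2*(Real.sqrt 2)*O.1 + (64225280)*f^12*y₁*O.2 + (51380224)*f^12*y₁*(Real.sqrt 2)*O.2 + (12845056)*f^12*y₁*(Real.sqrt 2)^2*O.2 + (278003712)*f^12*y₁^2 + (468844544)*f^12*y₁^2*(Real.sqrt 2) + (100466688)*f^12*y₁^2*(Real.sqrt 2)^2 + (34865152)*f^12*y₁^2*(Real.sqrt 2)^3 + (99549184)*f^12*y₁^2*(Real.sqrt 2)^4 + (102760448)*f^13*O.1 + (-102760448)*f^14*(Real.sqrt 2) + (-154140672)*f^14*(Real.sqrt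 2)^2 + (-102760448)*f^14*(Real.sqrt 2)^3) * hs2 +
      ((127008)*y₁^10 + (360640)*y₁^10*(Real.sqrt 2) + (308112)*y₁^10*(Real.sqrt 2)^2 + (-10976)*y₁^10*(Real.sqrt 2)^3 + (-154448)*y₁^10*(Real.sqrt 2)^4 + (-84672)*y₁^10*(Real.sqrt 2)^5 + (-15680)*y₁^10*(Real.sqrt 2)^6 + (809088)*f^2*y₁^8 + (2364544)*f^2*y₁^8*(Real.sqrt 2) + (2097984)*f^2*y₁^8*(Real.sqrt 2)^2 + (-87808)*f^2*y₁^8*(Real.sqrt 2)^3 + (-1194816)*f^2*y₁^8*(Real.sqrt 2)^4 + (-702464)*f^2*y₁^8*(Real.sqrt 2)^5 + (-137984)*f^2*y₁^8*(Real.sqrt 2)^6 + (351232)*f^4*y₁^6 + (1605632)*f^4*y₁^6*(Real.sqrt 2) + (2182656)*f^4*y₁^6*(Real.sqrt 2)^2 + (150528)*f^4*y₁^6*(Real.sqrt 2)^3 + (-1931776)*f^4*y₁^6*(Real.sqrt 2)^4 + (-1505280)*f^4*y₁^6*(Real.sqrt 2)^5 + (-351232)*f^4*y₁^6*(Real.sqrt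 2)^6 + (-3411968)*f^6*y₁^4 + (-8228864)*f^6*y₁^4*(Real.sqrt 2) + (-4515840)*f^6*y₁^4*(Real.sqrt 2)^2 + (2408448)*f^6*y₁^4*(Real.sqrt 2)^3 + (2308096)*f^6*y₁^4*(Real.sqrt 2)^4 + (-200704)*f^6*y₁^4*(Real.sqrt 2)^6 + (401408)*f^8*y₁^2 + (802816)*f^8*y₁^2*(Real.sqrt 2) + (1806336)*f^8*y₁^2*(Real.sqrt 2)^2 + (3612672)*f^8*y₁^2*(Real.sqrt 2)^3 + (3010560)*f^8*y₁^2*(Real.sqrt 2)^4 + (802816)*f^8*y₁^2*(Real.sqrt 2)^5 + (1605632)*f^10 + (1605632)*f^10*(Real.sqrt 2) + (-2408448)*f^10*(Real.sqrt 2)^2 + (-3211264)*f^10*(Real.sqrt 2)^3 + (-802816)*f^10*(Real.sqrt 2)^4) * hD2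
  have h5 := (mul_eq_zero.mp key).resolve_left hdet
  clear key
  linarith
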